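/- arXiv:1610.03086 — 2 statements merged into one kernel-verified Lean document; each statement's English description precedes it below -/
import Mathlib

section
/- Define U_n = ∫_α^1 e^{βt} P_n(t) dt and W_n = (1/β)(e^β − e^{βα} P_n(α)) for β ≠ 0. Then for every n ≥ 2, U_n = W_n − ((2(n−1)+1)/β) U_{n−1} + U_{n−2} − W_{n−2}. -/
noncomputable def legendreP (n : ℕ) (t : ℝ) : ℝ :=
  (1 / (2 ^ n * n.factorial : ℝ)) * iteratedDeriv n (fun x : ℝ => (x ^ 2 - 1) ^ n) t

namespace LegendreAux

open Polynomial

lemma C_two : (C (2:ℝ) : ℝ[X]) = 2 := map_ofNat C 2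

noncomputable def f (m : ℕ) : ℝ[X] := ((X : ℝ[X]) ^ 2 - 1) ^ m

lemma iter_deriv_X_mul (k : ℕ) (p : ℝ[X]) :
    derivative^[k] (X * p) =
      X * derivative^[k] p + (k : ℝ[X]) * derivative^[k - 1] p := by
  induction k with
  | zero => simp
  | succ k ih =>
    rw [Function.iterate_succ_apply', ih]
    cases k with
    | zero => simp [derivative_mul]; ring
    | succ j =>
      simp only [derivative_add, derivative_mul, derivative_X, derivative_natCast,
        ← Function.iterate_succ_apply']
      simp only [Nat.add_sub_cancel]
      push_cast
      ring

-- first order relation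
lemma base_rel (m : ℕ) : derivative (f m) = X * (((2 * m : ℕ) : ℝ[X]) * f (m - 1)) := by
  cases m with
  | zero => simp [f]
  | succ j =>
    rw [f, derivative_pow_succ, f, Nat.add_sub_cancel]
    simp [derivative_pow, C_eq_natCast, C_two]
    push_cast
    ring

lemma iter_deriv_sq_mul (k : ℕ) (p : ℝ[X]) :
    derivative^[k + 1] (((X : ℝ[X]) ^ 2 - 1) * p) =
      ((X : ℝ[X]) ^ 2 - 1) * derivative^[k + 1] p
        + 2 * ((k : ℝ[X]) + 1) * X * derivative^[k] p
        + ((k : ℝ[X]) + 1) * (k : ℝ[X]) * derivative^[k - 1] p := by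
  induction k with
  | zero =>
    simp [derivative_mul, derivative_pow, C_eq_natCast, C_two, derivative_add,
      Function.iterate_succ_apply']
    push_cast
    ring
  | succ k ih =>
    have e1 : derivative (derivative^[k] p) = derivative^[k + 1] p :=
      (Function.iterate_succ_apply' _ _ _).symm
    have e2 : derivative (derivative^[k + 1] p) = derivative^[k + 1 + 1] p :=
      (Function.iterate_succ_apply' _ _ _).symm
    have e3 : (k : ℝ[X]) * derivative (derivative^[k - 1] p) =
        (k : ℝ[X]) * derivative^[k] p := by
      cases k with
      | zero => simp
      | succ j =>
        rw [Nat.add_sub_cancel, Function.iterate_succ_apply' _ j]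
    rw [Function.iterate_succ_apply' _ (k+1), ih]
    simp only [derivative_add, derivative_mul, derivative_sub, derivative_pow, derivative_X,
      derivative_one, derivative_natCast, derivative_ofNat, C_eq_natCast, C_two,
      Nat.add_sub_cancel, e1, e2, -Nat.reduceAdd]
    push_cast
    linear_combination (((k:ℝ[X]) + 1)) * e3

lemma base2 (m : ℕ) : ((X : ℝ[X]) ^ 2 - 1) * derivative (f m) =
    X * (((2 * m : ℕ) : ℝ[X]) * f m) := by
  cases m with
  | zero => simp [f]
  | succ j =>
    rw [base_rel]
    have : f (j + 1) = ((X : ℝ[X]) ^ 2 - 1) * f j := by rw [f, f, pow_succ]; ring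
    rw [Nat.add_sub_cancel, this]
    push_cast
    ring

lemma ode (m : ℕ) :
    ((X : ℝ[X]) ^ 2 - 1) * derivative^[m + 2] (f m) + 2 * X * derivative^[m + 1] (f m)
      = (m : ℝ[X]) * ((m : ℝ[X]) + 1) * derivative^[m] (f m) := by
  have key := congrArg (derivative^[m + 1]) (base2 m)
  rw [iter_deriv_sq_mul m (derivative (f m)), iter_deriv_X_mul,
    iterate_derivative_natCast_mul, iterate_derivative_natCast_mul,
    Nat.add_sub_cancel] at key
  have e1 : derivative^[m + 1] (derivative (f m)) = derivative^[m + 2] (f m) :=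
    (Function.iterate_succ_apply _ _ _).symm
  have e2 : derivative^[m] (derivative (f m)) = derivative^[m + 1] (f m) :=
    (Function.iterate_succ_apply _ _ _).symm
  have e3 : ((m : ℝ[X]) + 1) * (m : ℝ[X]) * derivative^[m - 1] (derivative (f m))
      = ((m : ℝ[X]) + 1) * (m : ℝ[X]) * derivative^[m] (f m) := by
    cases m with
    | zero => simp
    | succ j =>
      rw [Nat.add_sub_cancel, ← Function.iterate_succ_apply]
  rw [e1, e2] at key
  push_cast at key ⊢
  linear_combination key - e3

lemma dvd_iter (j : ℕ) : ∀ (i : ℕ) (q : ℝ[X]),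
    ((X : ℝ[X]) - 1) ^ i ∣ derivative^[j] (((X : ℝ[X]) - 1) ^ (i + j) * q) := by
  induction j with
  | zero => intro i q; simpa using Dvd.intro _ rfl
  | succ j ih =>
    intro i q
    rw [Function.iterate_succ_apply]
    have : derivative (((X : ℝ[X]) - 1) ^ (i + (j + 1)) * q)
        = ((X : ℝ[X]) - 1) ^ (i + j) * ((((i + (j+1) : ℕ)) : ℝ[X]) * q + ((X : ℝ[X]) - 1) * derivative q) := by
      rw [derivative_mul, derivative_pow, derivative_sub, derivative_X, derivative_one,
        C_eq_natCast]
      rw [show i + (j + 1) - 1 = i + j by omega]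
      ring
    rw [this]
    exact ih i _

lemma eval_one_vanish {j m : ℕ} (h : j < m) : (derivative^[j] (f m)).eval 1 = 0 := by
  have hf : f m = ((X : ℝ[X]) - 1) ^ ((m - j) + j) * ((X : ℝ[X]) + 1) ^ m := by
    rw [f, show (X : ℝ[X]) ^ 2 - 1 = (X - 1) * (X + 1) by ring, mul_pow,
      show m - j + j = m by omega]
  obtain ⟨r, hr⟩ := dvd_iter j (m - j) (((X : ℝ[X]) + 1) ^ m)
  rw [hf, hr, eval_mul, eval_pow, eval_sub, eval_X, eval_one, sub_self,
    zero_pow (by omega : m - j ≠ 0), zero_mul]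

lemma eval_one_g (m : ℕ) : (derivative^[m] (f m)).eval 1 = 2 ^ m * m.factorial := by
  induction m with
  | zero => simp [f]
  | succ m ih =>
    have h1 : derivative^[m + 1] (f (m + 1))
        = derivative^[m] (X * (((2 * (m + 1) : ℕ) : ℝ[X]) * f m)) := by
      rw [Function.iterate_succ_apply, base_rel, Nat.add_sub_cancel]
    rw [h1, iter_deriv_X_mul, iterate_derivative_natCast_mul, iterate_derivative_natCast_mul]
    have hv : (m : ℝ) * (derivative^[m - 1] (f m)).eval 1 = 0 := by
      cases m with
      | zero => simp
      | succ j =>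
        rw [eval_one_vanish (by omega : j + 1 - 1 < j + 1), mul_zero]
    simp only [eval_add, eval_mul, eval_natCast, eval_X, one_mul]
    rw [ih]
    push_cast
    rw [Nat.factorial_succ]
    push_cast
    linear_combination 2 * ((m:ℝ) + 1) * hv

lemma Eident (j : ℕ) :
    ((X : ℝ[X]) ^ 2 - 1) * derivative^[j + 2] (f (j + 1))
      = ((j : ℝ[X]) + 1) * ((j : ℝ[X]) + 2) * derivative^[j] (f (j + 1)) := by
  set L := ((X : ℝ[X]) ^ 2 - 1) * derivative^[j + 2] (f (j + 1))
    - ((j : ℝ[X]) + 1) * ((j : ℝ[X]) + 2) * derivative^[j] (f (j + 1)) with hL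
  have hode := ode (j + 1)
  have hd : derivative L = 0 := by
    rw [hL, derivative_sub, derivative_mul, derivative_mul, derivative_sub, derivative_pow,
      derivative_X, derivative_one, C_eq_natCast]
    have e1 : derivative (derivative^[j + 2] (f (j + 1))) = derivative^[j + 1 + 2] (f (j + 1)) :=
      (Function.iterate_succ_apply' _ _ _).symm
    have e2 : derivative (derivative^[j] (f (j + 1))) = derivative^[j + 1] (f (j + 1)) :=
      (Function.iterate_succ_apply' _ _ _).symm
    have e3 : derivative (((j : ℝ[X]) + 1) * ((j : ℝ[X]) + 2)) = 0 := by
      simp [derivative_mul, derivative_add, derivative_natCast]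
    rw [e1, e2, e3]
    push_cast at hode ⊢
    have : (j : ℝ[X]) + 1 + 2 = (j : ℝ[X]) + 3 := by ring
    linear_combination hode
  have hdeg : L.natDegree = 0 := natDegree_eq_zero_of_derivative_eq_zero hd
  have hC : L = C (L.coeff 0) := eq_C_of_natDegree_eq_zero hdeg
  have hev : L.eval 1 = 0 := by
    rw [hL]
    simp only [eval_sub, eval_mul, eval_pow, eval_X, eval_add, eval_natCast, eval_one]
    rw [eval_one_vanish (by omega : j < j + 1)]
    norm_num
  rw [hC, eval_C] at hev
  have hz : L = 0 := by rw [hC, hev, map_zero]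
  rw [hL] at hz
  exact sub_eq_zero.mp hz

noncomputable def pol (m : ℕ) : ℝ[X] :=
  C (1 / (2 ^ m * m.factorial : ℝ)) * derivative^[m] (f m)

lemma cfact (k : ℕ) : C (1 / (2 ^ k * k.factorial : ℝ))
    = ((2 * k + 2 : ℕ) : ℝ[X]) * C (1 / (2 ^ (k + 1) * (k + 1).factorial : ℝ)) := by
  rw [← C_eq_natCast, ← C_mul]
  congr 1
  have h1 : (2 ^ k * k.factorial : ℝ) ≠ 0 := by positivity
  have h2 : (2 ^ (k + 1) * (k + 1).factorial : ℝ) ≠ 0 := by positivity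
  field_simp
  rw [Nat.factorial_succ]
  push_cast
  ring

lemma deriv_pol (m : ℕ) : derivative (pol m)
    = C (1 / (2 ^ m * m.factorial : ℝ)) * derivative^[m + 1] (f m) := by
  rw [pol, derivative_C_mul, Function.iterate_succ_apply' _ m]

lemma key (k : ℕ) : derivative (pol (k + 2))
    = (2 * (k : ℝ[X]) + 3) * pol (k + 1) + derivative (pol k) := by
  have h1 : derivative^[k + 1] (f (k + 1))
      = 2 * ((k : ℝ[X]) + 1) * (X * derivative^[k] (f k)
          + (k : ℝ[X]) * derivative^[k - 1] (f k)) := by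
    rw [Function.iterate_succ_apply, base_rel, show k + 1 - 1 = k from rfl,
      iter_deriv_X_mul, iterate_derivative_natCast_mul, iterate_derivative_natCast_mul]
    push_cast
    ring
  have h2 : derivative^[k + 1 + 1] (f (k + 1))
      = 2 * ((k : ℝ[X]) + 1) * (X * derivative^[k + 1] (f k)
          + ((k : ℝ[X]) + 1) * derivative^[k] (f k)) := by
    rw [Function.iterate_succ_apply, base_rel, show k + 1 - 1 = k from rfl,
      iter_deriv_X_mul, iterate_derivative_natCast_mul, iterate_derivative_natCast_mul,
      show k + 1 - 1 = k from rfl]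
    push_cast
    ring
  have h3 : derivative^[k + 2 + 1] (f (k + 2))
      = 2 * ((k : ℝ[X]) + 2) * (X * derivative^[k + 1 + 1] (f (k + 1))
          + ((k : ℝ[X]) + 2) * derivative^[k + 1] (f (k + 1))) := by
    rw [Function.iterate_succ_apply, base_rel, show k + 2 - 1 = k + 1 from rfl,
      iter_deriv_X_mul, iterate_derivative_natCast_mul, iterate_derivative_natCast_mul,
      show k + 2 - 1 = k + 1 from rfl, show k + 1 + 1 = k + 2 from rfl]
    push_cast
    ring
  have hE : ((X : ℝ[X]) ^ 2 - 1) * derivative^[k + 1] (f k)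
      = (k : ℝ[X]) * ((k : ℝ[X]) + 1) * derivative^[k - 1] (f k) := by
    cases k with
    | zero => simp [f]
    | succ j =>
      have := Eident j
      rw [Nat.add_sub_cancel]
      push_cast at this ⊢
      rw [show j + 1 + 1 = j + 2 from rfl] at this
      linear_combination this
  rw [deriv_pol, deriv_pol, pol, h3, h2, h1, cfact k, cfact (k + 1),
    show k + 1 + 1 = k + 2 from rfl]
  push_cast
  linear_combination (2 * (k : ℝ[X]) + 2) * (2 * (k + 1 : ℝ[X]) + 2)
    * C (1 / (2 ^ (k + 2) * (k + 2).factorial : ℝ)) * hE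

lemma iteratedDeriv_polyeval (n : ℕ) : ∀ p : ℝ[X],
    iteratedDeriv n (fun x => p.eval x) = fun x => (derivative^[n] p).eval x := by
  induction n with
  | zero => intro p; simp
  | succ n ih =>
    intro p
    rw [iteratedDeriv_succ']
    have : deriv (fun x => p.eval x) = fun x => (derivative p).eval x := by
      funext x; exact p.deriv
    rw [this, ih, Function.iterate_succ_apply]

lemma legendre_eval (n : ℕ) (t : ℝ) : legendreP n t = (pol n).eval t := by
  have hf : (fun x : ℝ => (x ^ 2 - 1) ^ n) = fun x => (f n).eval x := by
    funext x; simp [f]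
  rw [legendreP, hf, iteratedDeriv_polyeval, pol, eval_mul, eval_C]

lemma pol_eval_one (n : ℕ) : (pol n).eval 1 = 1 := by
  rw [pol, eval_mul, eval_C, eval_one_g]
  have : (2 ^ n * n.factorial : ℝ) ≠ 0 := by positivity
  field_simp

lemma exp_mul_cont (p : ℝ[X]) (β : ℝ) :
    Continuous fun t : ℝ => Real.exp (β * t) * p.eval t := by
  fun_prop

lemma ibp (α β : ℝ) (p : ℝ[X]) :
    (∫ t in α..1, Real.exp (β * t) * (derivative p).eval t)
      = (Real.exp (β * 1) * p.eval 1 - Real.exp (β * α) * p.eval α)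
        - β * ∫ t in α..1, Real.exp (β * t) * p.eval t := by
  have hderiv : ∀ t ∈ Set.uIcc α 1,
      HasDerivAt (fun t => Real.exp (β * t) * p.eval t)
        (β * (Real.exp (β * t) * p.eval t) + Real.exp (β * t) * (derivative p).eval t) t := by
    intro t _
    have h1 : HasDerivAt (fun t : ℝ => Real.exp (β * t)) (Real.exp (β * t) * β) t := by
      have := ((hasDerivAt_id t).const_mul β).exp
      simpa using this
    have := h1.mul (p.hasDerivAt t)
    refine this.congr_deriv ?_
    ring
  have hint : IntervalIntegrable
      (fun t => β * (Real.exp (β * t) * p.eval t) + Real.exp (β * t) * (derivative p).eval t)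
      MeasureTheory.volume α 1 := by
    apply Continuous.intervalIntegrable
    fun_prop
  have hFTC := intervalIntegral.integral_eq_sub_of_hasDerivAt hderiv hint
  have hsplit : (∫ t in α..1,
        (β * (Real.exp (β * t) * p.eval t) + Real.exp (β * t) * (derivative p).eval t))
      = β * (∫ t in α..1, Real.exp (β * t) * p.eval t)
        + ∫ t in α..1, Real.exp (β * t) * (derivative p).eval t := by
    rw [intervalIntegral.integral_add, intervalIntegral.integral_const_mul]
    · exact (Continuous.intervalIntegrable (by fun_prop) _ _)
    · exact Continuous.intervalIntegrable (exp_mul_cont (derivative p) β) _ _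
  rw [hsplit] at hFTC
  linarith [hFTC]


end LegendreAux

open LegendreAux Polynomial

/-- With `U_n = ∫_α^1 e^{βt} P_n(t) dt` and `W_n = (1/β)(e^β − e^{βα} P_n(α))`, for `n ≥ 2`:
`U_n = W_n − ((2(n−1)+1)/β) U_{n−1} + U_{n−2} − W_{n−2}`. -/
theorem legendre_exp_recurrence (α β : ℝ) (hβ : β ≠ 0) (hα : α ∈ Set.Icc (-1 : ℝ) 1)
    (U W : ℕ → ℝ)
    (hU : ∀ n, U n = ∫ t in α..1, Real.exp (β * t) * legendreP n t)
    (hW : ∀ n, W n = (1 / β) * (Real.exp β - Real.exp (β * α) * legendreP n α))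
    (n : ℕ) (hn : 2 ≤ n) :
    U n = W n - ((2 * ((n : ℝ) - 1) + 1) / β) * U (n - 1) + U (n - 2) - W (n - 2) := by
  obtain ⟨m, rfl⟩ : ∃ m, n = m + 2 := ⟨n - 2, by omega⟩
  rw [show m + 2 - 1 = m + 1 from rfl, show m + 2 - 2 = m from rfl]
  have hU' : ∀ j : ℕ, (∫ t in α..1, Real.exp (β * t) * (pol j).eval t) = U j := by
    intro j
    rw [hU j]
    simp only [legendre_eval]
  have hIBP : ∀ j : ℕ, (∫ t in α..1, Real.exp (β * t) * (derivative (pol j)).eval t)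
      = β * W j - β * U j := by
    intro j
    have h := ibp α β (pol j)
    rw [pol_eval_one, mul_one] at h
    rw [h, hW j, ← hU' j, legendre_eval]
    field_simp
  have hev : ∀ t : ℝ, (derivative (pol (m + 2))).eval t
      = (2 * (m : ℝ) + 3) * (pol (m + 1)).eval t + (derivative (pol m)).eval t := by
    intro t
    rw [key m]
    simp [eval_add, eval_mul, eval_natCast]
  have hint : (∫ t in α..1, Real.exp (β * t) * (derivative (pol (m + 2))).eval t)
      = (2 * (m : ℝ) + 3) * (∫ t in α..1, Real.exp (β * t) * (pol (m + 1)).eval t)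
        + ∫ t in α..1, Real.exp (β * t) * (derivative (pol m)).eval t := by
    rw [← intervalIntegral.integral_const_mul, ← intervalIntegral.integral_add
      (Continuous.intervalIntegrable (by fun_prop) _ _)
      (Continuous.intervalIntegrable (exp_mul_cont (derivative (pol m)) β) _ _)]
    apply intervalIntegral.integral_congr
    intro t _
    simp only [hev]
    ring
  rw [hIBP, hIBP, hU'] at hint
  push_cast
  field_simp
  linarith [hint]
end

section
/- With U_n = ∫_α^1 e^{βt} P_n(t) dt, W_n = (1/β)(e^β − e^{βα}P_n(α)), and Y_n := U_n − W_n, the sequence Y_n satisfies the second-order linear difference equation Y_{n−1} − ((2n+1)/β) Y_n − Y_{n+1} = ((2n+1)/β) W_n for all n ≥ 1. -/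
open Polynomial
noncomputable def pp (n : ℕ) : ℝ[X] := ((X:ℝ[X])^2 - 1)^n

lemma iterate_derivative_add' (k : ℕ) (p q : ℝ[X]) :
    derivative^[k] (p + q) = derivative^[k] p + derivative^[k] q := by
  induction k generalizing p q with
  | zero => rfl
  | succ k ih => rw [Function.iterate_succ_apply, derivative_add, ih,
      Function.iterate_succ_apply, Function.iterate_succ_apply]

lemma iterate_derivative_sub' (k : ℕ) (p q : ℝ[X]) :
    derivative^[k] (p - q) = derivative^[k] p - derivative^[k] q := by
  induction k generalizing p q with
  | zero => rfl
  | succ k ih => rw [Function.iterate_succ_apply, derivative_sub, ih,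
      Function.iterate_succ_apply, Function.iterate_succ_apply]

lemma L1 (k : ℕ) (q : ℝ[X]) :
    derivative^[k+1] (X * q) = X * derivative^[k+1] q + C ((k:ℝ)+1) * derivative^[k] q := by
  induction k generalizing q with
  | zero => simp [derivative_mul]; ring
  | succ k ih =>
      rw [Function.iterate_succ_apply, derivative_mul, derivative_X, one_mul,
        iterate_derivative_add', ih,
        ← Function.iterate_succ_apply, ← Function.iterate_succ_apply]
      push_cast
      simp only [map_add, map_mul, map_ofNat, C_1]
      ring

lemma L1gen (k : ℕ) (q : ℝ[X]) :
    derivative^[k] (X * q) = X * derivative^[k] q + C ((k:ℝ)) * derivative^[k-1] q := by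
  cases k with
  | zero => simp
  | succ k => rw [L1]; push_cast; simp

lemma L2s (k : ℕ) (q : ℝ[X]) :
    derivative^[k+2] (((X:ℝ[X])^2 - 1) * q) =
      ((X:ℝ[X])^2 - 1) * derivative^[k+2] q
        + C (2*((k:ℝ)+2)) * (X * derivative^[k+1] q)
        + C (((k:ℝ)+2)*((k:ℝ)+1)) * derivative^[k] q := by
  have h : ((X:ℝ[X])^2 - 1) * q = X * (X * q) - q := by ring
  rw [h, iterate_derivative_sub', show k+2 = (k+1)+1 from rfl, L1, L1, L1]
  push_cast
  simp only [map_add, map_mul, map_ofNat, C_1]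
  ring

lemma hd (m : ℕ) : derivative (pp (m+1)) = C (2*((m:ℝ)+1)) * (X * pp m) := by
  unfold pp
  rw [derivative_pow]
  simp only [derivative_sub, derivative_one, derivative_X_pow]
  push_cast
  simp only [map_add, map_mul, map_ofNat, C_1]
  ring

lemma ODE (m : ℕ) : ((X:ℝ[X])^2-1) * derivative (pp (m+1)) = C (2*((m:ℝ)+1)) * (X * pp (m+1)) := by
  rw [hd]
  have : pp (m+1) = ((X:ℝ[X])^2-1) * pp m := by unfold pp; ring
  rw [this]; ring

lemma D (m : ℕ) : ((X:ℝ[X])^2-1) * derivative^[m+1] (pp m)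
    = C ((m:ℝ)*((m:ℝ)+1)) * derivative^[m-1] (pp m) := by
  match m with
  | 0 => simp [pp]
  | 1 =>
      have h1 : pp 1 = (X:ℝ[X])^2 - 1 := by simp [pp]
      have h2 : derivative^[2] (pp 1) = C 2 := by
        rw [h1, show (2:ℕ) = 1 + 1 from rfl, Function.iterate_succ_apply]
        simp [derivative_sub, derivative_X_pow]
        rw [one_add_one_eq_two]; exact (map_ofNat C 2).symm
      rw [h2, h1]
      push_cast
      simp only [map_add, map_mul, map_ofNat, C_1, Function.iterate_zero, id_eq]
      ring
  | (j+2) =>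
      have h := congrArg (derivative^[j+2]) (ODE (j+1))
      rw [L2s, iterate_derivative_C_mul, L1 (j+1),
        ← Function.iterate_succ_apply derivative (j+2),
        ← Function.iterate_succ_apply derivative (j+1),
        ← Function.iterate_succ_apply derivative j] at h
      simp only [show j+2-1 = j+1 from rfl]
      linear_combination (norm := (push_cast; simp only [map_add, map_mul, map_ofNat, C_1]; ring1)) h

lemma Cp (m : ℕ) : derivative^[m+1] (pp (m+1)) =
    C 2 * (((X:ℝ[X])^2-1) * derivative^[m+1] (pp m))
      + C (2*((m:ℝ)+1)) * (X * derivative^[m] (pp m)) := by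
  have h1 : derivative^[m+1] (pp (m+1)) = C (2*((m:ℝ)+1)) * derivative^[m] (X * pp m) := by
    rw [Function.iterate_succ_apply, hd, iterate_derivative_C_mul]
  rw [h1, L1gen, D]
  simp only [map_add, map_mul, map_ofNat, C_1]
  ring

lemma KEY (m : ℕ) : derivative^[m+3] (pp (m+2)) =
    C (2*(2*(m:ℝ)+3)*((m:ℝ)+2)) * derivative^[m+1] (pp (m+1))
      + C (4*((m:ℝ)+1)*((m:ℝ)+2)) * derivative^[m+1] (pp m) := by
  have h1 : derivative^[m+2] (pp (m+1)) =
      C (2*((m:ℝ)+1)) * (X * derivative^[m+1] (pp m) + C ((m:ℝ)+1) * derivative^[m] (pp m)) := by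
    rw [Function.iterate_succ_apply, hd, iterate_derivative_C_mul, L1]
  have h2 : X * derivative^[m+2] (pp (m+1)) =
      C ((m:ℝ)+1) * derivative^[m+1] (pp (m+1)) + C (2*((m:ℝ)+1)) * derivative^[m+1] (pp m) := by
    linear_combination (norm := (simp only [map_add, map_mul, map_ofNat, C_1]; ring1))
      X * h1 - C ((m:ℝ)+1) * Cp m
  have h0 : derivative^[m+3] (pp (m+2)) =
      C (2*((m:ℝ)+2)) * (X * derivative^[m+2] (pp (m+1)) + C ((m:ℝ)+2) * derivative^[m+1] (pp (m+1))) := by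
    rw [show m+3 = (m+2)+1 from rfl, Function.iterate_succ_apply, hd, iterate_derivative_C_mul,
      L1]
    push_cast; ring_nf
  linear_combination (norm := (simp only [map_add, map_mul, map_ofNat, C_1]; ring1))
    h0 + C (2*((m:ℝ)+2)) * h2

noncomputable def Lp (n : ℕ) : ℝ[X] :=
  C (1/(2^n * n.factorial : ℝ)) * derivative^[n] (pp n)

lemma LKEY (m : ℕ) :
    derivative (Lp (m+2)) = C (2*(m:ℝ)+3) * Lp (m+1) + derivative (Lp m) := by
  unfold Lp
  rw [derivative_C_mul, derivative_C_mul, ← Function.iterate_succ_apply' derivative (m+2),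
    ← Function.iterate_succ_apply' derivative m, KEY]
  have hf1 : ((m+1).factorial : ℝ) ≠ 0 := by
    exact_mod_cast Nat.factorial_ne_zero _
  have hf2 : ((m).factorial : ℝ) ≠ 0 := by
    exact_mod_cast Nat.factorial_ne_zero _
  have e1 : (1/(2^(m+2) * ((m+2).factorial:ℝ))) * (2*(2*(m:ℝ)+3)*((m:ℝ)+2))
      = (2*(m:ℝ)+3) * (1/(2^(m+1) * ((m+1).factorial:ℝ))) := by
    rw [Nat.factorial_succ (m+1)]
    push_cast
    field_simp
    ring
  have e2 : (1/(2^(m+2) * ((m+2).factorial:ℝ))) * (4*((m:ℝ)+1)*((m:ℝ)+2))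
      = (1/(2^m * ((m).factorial:ℝ))) := by
    rw [Nat.factorial_succ (m+1), Nat.factorial_succ m]
    push_cast
    field_simp
    ring
  rw [mul_add]
  rw [← mul_assoc (C (2*(m:ℝ)+3)), ← C_mul]
  rw [← mul_assoc, ← mul_assoc, ← C_mul, ← C_mul]
  congr 1
  · congr 1
    rw [C_inj, Nat.factorial_succ (m+1)]
    push_cast
    field_simp
    ring
  · congr 1
    rw [C_inj, Nat.factorial_succ (m+1), Nat.factorial_succ m]
    push_cast
    field_simp
    ring

open Finset in
lemma evalQ1 (n : ℕ) : eval 1 (derivative^[n] (pp n)) = 2^n * n.factorial := by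
  have hpp : pp n = ((X:ℝ[X]) - C 1)^n * ((X:ℝ[X]) + C 1)^n := by
    unfold pp
    rw [← mul_pow]
    norm_num
    ring_nf
  rw [hpp, iterate_derivative_mul, eval_finset_sum,
    sum_eq_single_of_mem 0 (mem_range.mpr n.succ_pos)]
  · rw [n.choose_zero_right, one_smul, eval_mul, n.sub_zero, iterate_derivative_X_sub_pow_self,
      eval_natCast, Function.iterate_zero, id_eq, eval_pow, eval_add, eval_X, eval_C]
    norm_num
    ring
  · intro b hb hb0
    rw [iterate_derivative_X_sub_pow, eval_smul, eval_mul, eval_smul, eval_pow,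
      Nat.sub_sub_self (mem_range_succ_iff.mp hb), eval_sub, eval_X, eval_C, sub_self,
      zero_pow hb0, smul_zero, zero_mul, smul_zero]

lemma Lp_eval_one (n : ℕ) : eval 1 (Lp n) = 1 := by
  unfold Lp
  rw [eval_mul, eval_C, evalQ1]
  have h1 : ((2:ℝ)^n * n.factorial) ≠ 0 := by
    positivity
  field_simp

lemma iteratedDeriv_polyeval (n : ℕ) (p : ℝ[X]) :
    iteratedDeriv n (fun x => p.eval x) = fun x => (derivative^[n] p).eval x := by
  induction n generalizing p with
  | zero => simp
  | succ n ih =>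
      rw [iteratedDeriv_succ']
      have : deriv (fun x => p.eval x) = fun x => (derivative p).eval x := by
        funext x; exact p.deriv
      rw [this, ih, Function.iterate_succ_apply]

lemma legendre_eq (n : ℕ) (t : ℝ) : legendreP n t = eval t (Lp n) := by
  unfold legendreP Lp
  have h : (fun x : ℝ => (x^2-1)^n) = fun x => eval x (pp n) := by
    funext x; simp [pp]
  rw [h, iteratedDeriv_polyeval]
  simp

/-- With `U_n = ∫_α^1 e^{βt} P_n(t) dt`, `W_n = (1/β)(e^β − e^{βα} P_n(α))` and
`Y_n = U_n − W_n`, the sequence `Y_n` satisfies, for all `n ≥ 1`: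
`Y_{n−1} − ((2n+1)/β) Y_n − Y_{n+1} = ((2n+1)/β) W_n`. -/
theorem legendre_exp_difference_equation (α β : ℝ) (hβ : β ≠ 0)
    (hα : α ∈ Set.Icc (-1 : ℝ) 1) (U W Y : ℕ → ℝ)
    (hU : ∀ n, U n = ∫ t in α..1, Real.exp (β * t) * legendreP n t)
    (hW : ∀ n, W n = (1 / β) * (Real.exp β - Real.exp (β * α) * legendreP n α))
    (hY : ∀ n, Y n = U n - W n)
    (n : ℕ) (hn : 1 ≤ n) :
    Y (n - 1) - ((2 * (n : ℝ) + 1) / β) * Y n - Y (n + 1) =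
      ((2 * (n : ℝ) + 1) / β) * W n := by
  obtain ⟨m, rfl⟩ : ∃ m, n = m + 1 := ⟨n - 1, (Nat.succ_pred_eq_of_pos hn).symm⟩
  set q : ℝ[X] := Lp (m+2) - Lp m with hqdef
  -- continuity
  have hcont : ∀ p : ℝ[X], Continuous fun t : ℝ => Real.exp (β*t) * eval t p := by
    intro p
    exact (Real.continuous_exp.comp (continuous_const.mul continuous_id)).mul
      (Polynomial.continuous p)
  have hint : ∀ p : ℝ[X], IntervalIntegrable (fun t : ℝ => Real.exp (β*t) * eval t p)
      MeasureTheory.volume α 1 := fun p => (hcont p).intervalIntegrable α 1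
  -- derivative of q
  have hdq : derivative q = C (2*(m:ℝ)+3) * Lp (m+1) := by
    rw [hqdef, derivative_sub, LKEY]; ring
  -- FTC
  have hderiv : ∀ t : ℝ, HasDerivAt (fun t => Real.exp (β*t) * eval t q)
      (β * (Real.exp (β*t) * eval t q)
        + (2*(m:ℝ)+3) * (Real.exp (β*t) * eval t (Lp (m+1)))) t := by
    intro t
    have h1 : HasDerivAt (fun t : ℝ => Real.exp (β*t)) (β * Real.exp (β*t)) t := by
      have h0 : HasDerivAt (fun t : ℝ => β*t) β t := by
        simpa using (hasDerivAt_id t).const_mul β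
      simpa [mul_comm] using h0.exp
    have h2 := h1.mul (q.hasDerivAt t)
    have h3 : β * Real.exp (β*t) * eval t q + Real.exp (β*t) * eval t (derivative q)
        = β * (Real.exp (β*t) * eval t q)
          + (2*(m:ℝ)+3) * (Real.exp (β*t) * eval t (Lp (m+1))) := by
      rw [hdq, eval_mul, eval_C]; ring
    exact h3 ▸ h2
  have hIcont : Continuous fun t : ℝ => β * (Real.exp (β*t) * eval t q)
      + (2*(m:ℝ)+3) * (Real.exp (β*t) * eval t (Lp (m+1))) :=
    ((continuous_const.mul (hcont q))).add ((continuous_const.mul (hcont (Lp (m+1)))))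
  have hFTC := intervalIntegral.integral_eq_sub_of_hasDerivAt
    (f := fun t => Real.exp (β*t) * eval t q) (fun t _ => hderiv t)
    (hIcont.intervalIntegrable α 1)
  -- split the integral
  have hsplit : (∫ t in α..1, (β * (Real.exp (β*t) * eval t q)
      + (2*(m:ℝ)+3) * (Real.exp (β*t) * eval t (Lp (m+1)))))
      = β * (∫ t in α..1, Real.exp (β*t) * eval t q)
        + (2*(m:ℝ)+3) * (∫ t in α..1, Real.exp (β*t) * eval t (Lp (m+1))) := by
    rw [intervalIntegral.integral_add ((hint q).const_mul β) ((hint (Lp (m+1))).const_mul _),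
      intervalIntegral.integral_const_mul, intervalIntegral.integral_const_mul]
  -- q integral = U (m+2) - U m
  have hqint : (∫ t in α..1, Real.exp (β*t) * eval t q) = U (m+2) - U m := by
    have : (fun t : ℝ => Real.exp (β*t) * eval t q)
        = fun t => Real.exp (β*t) * eval t (Lp (m+2)) - Real.exp (β*t) * eval t (Lp m) := by
      funext t; rw [hqdef]; simp [mul_sub]
    rw [this, intervalIntegral.integral_sub (hint _) (hint _), hU, hU]
    simp only [legendre_eq]
  have hUn : U (m+1) = ∫ t in α..1, Real.exp (β*t) * eval t (Lp (m+1)) := by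
    rw [hU]; simp only [legendre_eq]
  -- boundary values
  have hq1 : eval 1 q = 0 := by rw [hqdef]; simp [Lp_eval_one]
  -- the central relation
  have R : β * (U (m+2) - U m) + (2*(m:ℝ)+3) * U (m+1) = β * (W (m+2) - W m) := by
    have hL : β * (U (m+2) - U m) + (2*(m:ℝ)+3) * U (m+1)
        = Real.exp (β*1) * eval 1 q - Real.exp (β*α) * eval α q := by
      rw [← hqint, ← hFTC, hsplit, hUn]
    rw [hL, hq1]
    rw [hW, hW, legendre_eq, legendre_eq, hqdef]
    simp only [eval_sub]
    field_simp
    ring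
  -- finish
  simp only [Nat.add_sub_cancel, show m+1+1 = m+2 from rfl]
  rw [hY, hY, hY]
  have hc : ((2 * ((m:ℝ)+1) + 1) / β) = (2*(m:ℝ)+3)/β := by ring
  push_cast
  rw [hc]
  field_simp
  linear_combination -R
end
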